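/- Let H be a complex matrix with no spectrum on the imaginary axis, P the Riesz projection onto the spectrum with negative real part, and J a selfadjoint unitary with JHJ = −H. Then JPJ = 1 − P, and in the spectral representation of J the idempotent P takes the form P = (1/2)[[1, W],[V, 1]] with VW = 1 and WV = 1. -/

import Mathlib

open Matrix

set_option synthInstance.maxHeartbeats 1000000
set_option maxHeartbeats 1000000

lemma idem_eq {n : Type*} [Fintype n] [DecidableEq n]
    (M N : Matrix n n ℂ) (hM : M * M = M) (hN : N * N = N)
    (hr : LinearMap.range (Matrix.toLin' M) = LinearMap.range (Matrix.toLin' N))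
    (hk : LinearMap.ker (Matrix.toLin' M) = LinearMap.ker (Matrix.toLin' N)) :
    M = N := by
  apply Matrix.toLin'.injective
  set Ml := Matrix.toLin' M
  set Nl := Matrix.toLin' N
  have hM' : ∀ x, Ml (Ml x) = Ml x := fun x => by
    have := congrArg Matrix.toLin' hM
    rw [Matrix.toLin'_mul] at this
    exact DFunLike.congr_fun this x
  have hN' : ∀ x, Nl (Nl x) = Nl x := fun x => by
    have := congrArg Matrix.toLin' hN
    rw [Matrix.toLin'_mul] at this
    exact DFunLike.congr_fun this x
  refine LinearMap.ext fun x => ?_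
  have h1 : Ml (Nl x) = Nl x := by
    have : Nl x ∈ LinearMap.range Ml := hr ▸ LinearMap.mem_range_self Nl x
    obtain ⟨y, hy⟩ := this
    rw [← hy, hM']
  have h2 : Ml (x - Nl x) = 0 := by
    have : x - Nl x ∈ LinearMap.ker Nl := by
      simp [LinearMap.mem_ker, map_sub, hN' x]
    rw [← hk] at this
    exact this
  rw [map_sub, h1, sub_eq_zero] at h2
  exact h2

lemma gen_eig_map {V : Type*} [AddCommGroup V] [Module ℂ V]
    (Hl Jl : Module.End ℂ V) (hanti : Jl * Hl = -(Hl * Jl)) (μ : ℂ)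
    (x : V) (hx : x ∈ Module.End.maxGenEigenspace Hl μ) :
    Jl x ∈ Module.End.maxGenEigenspace Hl (-μ) := by
  rw [Module.End.mem_maxGenEigenspace] at hx ⊢
  obtain ⟨m, hm⟩ := hx
  refine ⟨m, ?_⟩
  have hanti' : Hl * Jl = -(Jl * Hl) := by rw [hanti, neg_neg]
  have hc : (Hl - (-μ) • 1) * Jl = -(Jl * (Hl - μ • 1)) := by
    rw [sub_mul, mul_sub, smul_mul_assoc, one_mul, mul_smul_comm, mul_one, hanti']
    module
  have hpow : ∀ m : ℕ, (Hl - (-μ) • 1) ^ m * Jl = ((-1 : ℂ) ^ m) • (Jl * (Hl - μ • 1) ^ m) := by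
    intro m
    induction m with
    | zero => simp
    | succ m ih =>
      rw [pow_succ, mul_assoc, hc, mul_neg, ← mul_assoc, ih, pow_succ (-1 : ℂ), pow_succ,
        smul_mul_assoc, mul_smul, mul_assoc]
      simp
  have := DFunLike.congr_fun (hpow m) x
  simp only [Module.End.mul_apply, LinearMap.smul_apply, hm, map_zero, smul_zero] at this
  exact this

/-- Let `H` be a complex matrix with no spectrum on the imaginary axis,
`P` the Riesz projection onto the spectrum with negative real part (characterized as
the idempotent commuting with `H` whose range is the sum of the generalized
eigenspaces of eigenvalues with negative real part and whose kernel is that for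
positive real part), and `J` a selfadjoint unitary with `JHJ = −H`, written in its
spectral representation `J = diag(1, −1)`.  Then `JPJ = 1 − P` and
`P = ½ [[1, W], [V, 1]]` with `VW = 1` and `WV = 1`. -/
theorem riesz_projection_chiral_form {k l : ℕ}
    (H P : Matrix (Fin k ⊕ Fin l) (Fin k ⊕ Fin l) ℂ)
    (J : Matrix (Fin k ⊕ Fin l) (Fin k ⊕ Fin l) ℂ)
    (hJ : J = Matrix.fromBlocks 1 0 0 (-1))
    (hspec : ∀ z ∈ spectrum ℂ H, z.re ≠ 0)
    (hchiral : J * H * J = -H)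
    (hP2 : P * P = P)
    (hPH : P * H = H * P)
    (hran : LinearMap.range (Matrix.toLin' P) =
        ⨆ (μ : ℂ) (_ : μ.re < 0), Module.End.maxGenEigenspace (Matrix.toLin' H) μ)
    (hker : LinearMap.ker (Matrix.toLin' P) =
        ⨆ (μ : ℂ) (_ : 0 < μ.re), Module.End.maxGenEigenspace (Matrix.toLin' H) μ) :
    J * P * J = 1 - P ∧
    ∃ (W : Matrix (Fin k) (Fin l) ℂ) (V : Matrix (Fin l) (Fin k) ℂ),
      P = (2 : ℂ)⁻¹ • Matrix.fromBlocks 1 W V 1 ∧ V * W = 1 ∧ W * V = 1 := by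
  have hJJ : J * J = 1 := by
    subst hJ
    simp [Matrix.fromBlocks_multiply]
  -- matrix-level anticommutation
  have hJHm : J * H = -(H * J) := by
    have h := congrArg (fun X => X * J) hchiral
    rw [mul_assoc (J * H), hJJ, mul_one, neg_mul] at h
    exact h
  set Hl := Matrix.toLin' H with hHl
  set Pl := Matrix.toLin' P with hPl
  set Jl := Matrix.toLin' J with hJl
  have hanti : Jl * Hl = -(Hl * Jl) := by
    have h := congrArg Matrix.toLin' hJHm
    rw [Matrix.toLin'_mul, map_neg, Matrix.toLin'_mul] at h
    exact h
  have hJl2 : ∀ x, Jl (Jl x) = x := fun x => by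
    have := congrArg Matrix.toLin' hJJ
    rw [Matrix.toLin'_mul, Matrix.toLin'_one] at this
    exact DFunLike.congr_fun this x
  -- J maps generalized eigenspaces μ to -μ
  have hmap : ∀ μ : ℂ, Submodule.map Jl (Module.End.maxGenEigenspace Hl μ)
      = Module.End.maxGenEigenspace Hl (-μ) := by
    intro μ
    apply le_antisymm
    · rintro _ ⟨x, hx, rfl⟩
      exact gen_eig_map Hl Jl hanti μ x hx
    · intro x hx
      refine ⟨Jl x, ?_, hJl2 x⟩
      have := gen_eig_map Hl Jl hanti (-μ) x hx
      rwa [neg_neg] at this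
  -- map of sups
  have hmapneg : Submodule.map Jl (⨆ (μ : ℂ) (_ : μ.re < 0),
        Module.End.maxGenEigenspace Hl μ)
      = ⨆ (μ : ℂ) (_ : 0 < μ.re), Module.End.maxGenEigenspace Hl μ := by
    rw [Submodule.map_iSup]
    have : ∀ μ : ℂ, Submodule.map Jl (⨆ (_ : μ.re < 0), Module.End.maxGenEigenspace Hl μ)
        = ⨆ (_ : μ.re < 0), Module.End.maxGenEigenspace Hl (-μ) := by
      intro μ
      rw [Submodule.map_iSup]
      exact iSup_congr fun _ => hmap μ
    rw [iSup_congr this]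
    apply le_antisymm
    · exact iSup₂_le fun μ hμ => le_iSup₂_of_le (-μ) (by simpa using hμ) le_rfl
    · exact iSup₂_le fun ν hν => le_iSup₂_of_le (-ν)
        (by simpa using hν) (by rw [neg_neg])
  have hmappos : Submodule.map Jl (⨆ (μ : ℂ) (_ : 0 < μ.re),
        Module.End.maxGenEigenspace Hl μ)
      = ⨆ (μ : ℂ) (_ : μ.re < 0), Module.End.maxGenEigenspace Hl μ := by
    rw [Submodule.map_iSup]
    have : ∀ μ : ℂ, Submodule.map Jl (⨆ (_ : 0 < μ.re), Module.End.maxGenEigenspace Hl μ)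
        = ⨆ (_ : 0 < μ.re), Module.End.maxGenEigenspace Hl (-μ) := by
      intro μ
      rw [Submodule.map_iSup]
      exact iSup_congr fun _ => hmap μ
    rw [iSup_congr this]
    apply le_antisymm
    · exact iSup₂_le fun μ hμ => le_iSup₂_of_le (-μ) (by simpa using hμ) le_rfl
    · exact iSup₂_le fun ν hν => le_iSup₂_of_le (-ν)
        (by simpa using hν) (by rw [neg_neg])
  -- range and kernel of J*P*J
  have hQl : Matrix.toLin' (J * P * J) = Jl ∘ₗ (Pl ∘ₗ Jl) := by
    rw [Matrix.toLin'_mul, Matrix.toLin'_mul]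
    rfl
  have hJsurj : Function.Surjective Jl := fun x => ⟨Jl x, hJl2 x⟩
  have hcomap : ∀ S : Submodule ℂ ((Fin k ⊕ Fin l) → ℂ),
      Submodule.comap Jl S = Submodule.map Jl S := by
    intro S
    ext x
    constructor
    · intro hx
      exact ⟨Jl x, hx, hJl2 x⟩
    · rintro ⟨y, hy, rfl⟩
      simpa [Submodule.mem_comap, hJl2 y] using hy
  have hrQ : LinearMap.range (Matrix.toLin' (J * P * J)) = LinearMap.ker Pl := by
    rw [hQl, LinearMap.range_comp, LinearMap.range_comp,
        LinearMap.range_eq_top.mpr hJsurj, Submodule.map_top, hran, hmapneg, hker]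
  have hJinj : LinearMap.ker Jl = ⊥ := by
    rw [LinearMap.ker_eq_bot]
    intro a b hab
    have := congrArg Jl hab
    rwa [hJl2, hJl2] at this
  have hkQ : LinearMap.ker (Matrix.toLin' (J * P * J)) = LinearMap.range Pl := by
    rw [hQl, LinearMap.ker_comp_of_ker_eq_bot _ hJinj, LinearMap.ker_comp, hker,
        hcomap, hmappos, hran]
  -- idempotency of J*P*J and 1-P
  have hQ2 : (J * P * J) * (J * P * J) = J * P * J := by
    calc (J * P * J) * (J * P * J) = J * P * ((J * J) * (P * J)) := by
          simp only [mul_assoc]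
    _ = J * (P * P) * J := by rw [hJJ, one_mul, ← mul_assoc, ← mul_assoc]
    _ = J * P * J := by rw [hP2]
  have h1P2 : (1 - P) * (1 - P) = 1 - P := by
    have : (1 - P) * (1 - P) = 1 - P - P + P * P := by noncomm_ring
    rw [this, hP2]
    abel
  -- range and kernel of 1-P
  have hPl2 : ∀ x, Pl (Pl x) = Pl x := fun x => by
    have := congrArg Matrix.toLin' hP2
    rw [Matrix.toLin'_mul] at this
    exact DFunLike.congr_fun this x
  have h1Pl : Matrix.toLin' (1 - P) = LinearMap.id - Pl := by
    rw [map_sub, Matrix.toLin'_one]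
  have hr1P : LinearMap.range (Matrix.toLin' (1 - P)) = LinearMap.ker Pl := by
    rw [h1Pl]
    apply le_antisymm
    · rintro _ ⟨y, rfl⟩
      simp [LinearMap.mem_ker, map_sub, hPl2 y]
    · intro x hx
      rw [LinearMap.mem_ker] at hx
      exact ⟨x, by simp [hx]⟩
  have hk1P : LinearMap.ker (Matrix.toLin' (1 - P)) = LinearMap.range Pl := by
    rw [h1Pl]
    apply le_antisymm
    · intro x hx
      rw [LinearMap.mem_ker, LinearMap.sub_apply, LinearMap.id_apply, sub_eq_zero] at hx
      exact ⟨x, hx.symm⟩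
    · rintro _ ⟨y, rfl⟩
      simp [LinearMap.mem_ker, map_sub, hPl2 y]
  have hJPJ : J * P * J = 1 - P :=
    idem_eq _ _ hQ2 h1P2 (by rw [hrQ, hr1P]) (by rw [hkQ, hk1P])
  refine ⟨hJPJ, ?_⟩
  -- block decomposition
  set A := P.toBlocks₁₁ with hA
  set B := P.toBlocks₁₂ with hB
  set C := P.toBlocks₂₁ with hC
  set D := P.toBlocks₂₂ with hD
  have hPblocks : P = fromBlocks A B C D := (Matrix.fromBlocks_toBlocks P).symm
  have hblk : fromBlocks A (-B) (-C) D = fromBlocks (1 - A) (-B) (-C) (1 - D) := by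
    calc fromBlocks A (-B) (-C) D
        = fromBlocks 1 0 0 (-1) * fromBlocks A B C D * fromBlocks 1 0 0 (-1) := by
          rw [Matrix.fromBlocks_multiply, Matrix.fromBlocks_multiply]
          simp
    _ = 1 - fromBlocks A B C D := by rw [← hPblocks, ← hJ]; exact hJPJ
    _ = fromBlocks (1 - A) (-B) (-C) (1 - D) := by
          rw [← Matrix.fromBlocks_one, sub_eq_add_neg, Matrix.fromBlocks_neg,
            Matrix.fromBlocks_add]
          simp [sub_eq_add_neg]
  rw [Matrix.fromBlocks_inj] at hblk
  obtain ⟨hA1, -, -, hD1⟩ := hblk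
  have hAh : A = (2 : ℂ)⁻¹ • 1 := by
    have h2 : A + A = 1 := by
      nth_rewrite 1 [hA1]
      abel
    have : A = (2 : ℂ)⁻¹ • (A + A) := by module
    rw [this, h2]
  have hDh : D = (2 : ℂ)⁻¹ • 1 := by
    have h2 : D + D = 1 := by
      nth_rewrite 1 [hD1]
      abel
    have : D = (2 : ℂ)⁻¹ • (D + D) := by module
    rw [this, h2]
  have hPform : P = fromBlocks ((2 : ℂ)⁻¹ • 1) B C ((2 : ℂ)⁻¹ • 1) := by
    rw [hPblocks, hAh, hDh]
  refine ⟨(2 : ℂ) • B, (2 : ℂ) • C, ?_, ?_, ?_⟩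
  · rw [hPform, Matrix.fromBlocks_smul, smul_smul, smul_smul]
    norm_num
  · -- V * W = (2•C)*(2•B) = 1, from block 2,2 of P*P = P
    have h := hP2
    rw [hPform, Matrix.fromBlocks_multiply, Matrix.fromBlocks_inj] at h
    obtain ⟨-, -, -, h22⟩ := h
    have hCB : C * B = (2 : ℂ)⁻¹ • (1 : Matrix (Fin l) (Fin l) ℂ)
        - ((2 : ℂ)⁻¹ * (2 : ℂ)⁻¹) • 1 := by
      rw [Matrix.smul_mul, Matrix.mul_smul, smul_smul, one_mul] at h22
      exact eq_sub_of_add_eq h22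
    rw [Matrix.smul_mul, Matrix.mul_smul, hCB]
    match_scalars <;> norm_num
  · have h := hP2
    rw [hPform, Matrix.fromBlocks_multiply, Matrix.fromBlocks_inj] at h
    obtain ⟨h11, -, -, -⟩ := h
    have hBC : B * C = (2 : ℂ)⁻¹ • (1 : Matrix (Fin k) (Fin k) ℂ)
        - ((2 : ℂ)⁻¹ * (2 : ℂ)⁻¹) • 1 := by
      rw [Matrix.smul_mul, Matrix.mul_smul, smul_smul, one_mul] at h11
      exact eq_sub_of_add_eq' h11
    rw [Matrix.smul_mul, Matrix.mul_smul, hBC]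
    match_scalars <;> norm_num
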